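/- Let Y, Z ⊆ (X,d) be tangent equivalent at a ∈ Y ∩ Z w.r.t. r̃, and suppose there is a unique maximal self-stable family Z̃_{a,r̃} in Z̃ containing ã. Then Ỹ_{a,r̃} := [Z̃_{a,r̃}]_Y is the unique maximal self-stable family in Ỹ containing ã. -/

import Mathlib

open Filter Topology

/-- A normalizing sequence: positive reals tending to 0. -/
def Normalizing (r : ℕ → ℝ) : Prop :=
  (∀ n, 0 < r n) ∧ Tendsto r atTop (nhds 0)

/-- Two sequences in `X` are mutually stable w.r.t. `r`:
the limit of `dist (x n) (y n) / r n` exists and is finite. -/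
def MutuallyStable {X : Type*} [MetricSpace X] (r : ℕ → ℝ) (x y : ℕ → X) : Prop :=
  ∃ L : ℝ, Tendsto (fun n => dist (x n) (y n) / r n) atTop (nhds L)

/-- The normalized limit distance `d̃`. -/
noncomputable def dtilde {X : Type*} [MetricSpace X] (r : ℕ → ℝ) (x y : ℕ → X) : ℝ :=
  limUnder atTop (fun n => dist (x n) (y n) / r n)

/-- A family is self-stable if every two members are mutually stable. -/
def SelfStable {X : Type*} [MetricSpace X] (r : ℕ → ℝ) (F : Set (ℕ → X)) : Prop :=
  ∀ x ∈ F, ∀ y ∈ F, MutuallyStable r x y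

/-- A family is maximal self-stable if it is self-stable and maximal with that property. -/
def MaximalSelfStable {X : Type*} [MetricSpace X] (r : ℕ → ℝ) (F : Set (ℕ → X)) : Prop :=
  SelfStable r F ∧ ∀ G, SelfStable r G → F ⊆ G → G = F

/-- A sequence lies in the subspace `Y`. -/
def InSubspace {X : Type*} (Y : Set X) (x : ℕ → X) : Prop := ∀ n, x n ∈ Y

/-- A family of sequences in the subspace `Y` that is self-stable and maximal among
self-stable families of sequences in `Y`. -/
def MaximalSelfStableIn {X : Type*} [MetricSpace X] (Y : Set X) (r : ℕ → ℝ)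
    (F : Set (ℕ → X)) : Prop :=
  (∀ x ∈ F, InSubspace Y x) ∧ SelfStable r F ∧
    ∀ G, (∀ x ∈ G, InSubspace Y x) → SelfStable r G → F ⊆ G → G = F

/-- `[F]_Y`: all sequences in `Y` at normalized distance 0 from some member of `F`. -/
def bracket {X : Type*} [MetricSpace X] (Y : Set X) (r : ℕ → ℝ) (F : Set (ℕ → X)) :
    Set (ℕ → X) :=
  {y | InSubspace Y y ∧ ∃ x ∈ F, Tendsto (fun n => dist (x n) (y n) / r n) atTop (nhds 0)}

/-- `Y` and `Z` are tangent equivalent at `a` w.r.t. `r`. -/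
def TangentEquiv {X : Type*} [MetricSpace X] (Y Z : Set X) (a : X) (r : ℕ → ℝ) : Prop :=
  (∀ y : ℕ → X, InSubspace Y y → MutuallyStable r y (fun _ => a) →
    ∃ z : ℕ → X, InSubspace Z z ∧
      Tendsto (fun n => dist (y n) (z n) / r n) atTop (nhds 0)) ∧
  (∀ z : ℕ → X, InSubspace Z z → MutuallyStable r z (fun _ => a) →
    ∃ y : ℕ → X, InSubspace Y y ∧
      Tendsto (fun n => dist (z n) (y n) / r n) atTop (nhds 0))

/-- `Y` and `Z` are strongly tangent equivalent at `a`. -/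
def StronglyTangentEquiv {X : Type*} [MetricSpace X] (Y Z : Set X) (a : X) : Prop :=
  ∀ r : ℕ → ℝ, Normalizing r → TangentEquiv Y Z a r

/-- `ε_a(t, Z, Y) = sup_{z ∈ S^Z(a,t)} inf_{y ∈ Y} dist z y`
(here the first set argument is `Y`, the second is `Z`). -/
noncomputable def epsZY {X : Type*} [MetricSpace X] (Y Z : Set X) (a : X) (t : ℝ) : ℝ :=
  sSup ((fun z => sInf ((fun y => dist z y) '' Y)) '' {z ∈ Z | dist a z = t})

section Aux

open Filter Topology

variable {X : Type*} [MetricSpace X]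

/-- Transfer of limits along zero-distance perturbations. -/
lemma transfer_tendsto {r : ℕ → ℝ} (hr : Normalizing r)
    {x x' y y' : ℕ → X} {L : ℝ}
    (hxy : Tendsto (fun n => dist (x n) (y n) / r n) atTop (nhds 0))
    (hx'y' : Tendsto (fun n => dist (x' n) (y' n) / r n) atTop (nhds 0))
    (hxx' : Tendsto (fun n => dist (x n) (x' n) / r n) atTop (nhds L)) :
    Tendsto (fun n => dist (y n) (y' n) / r n) atTop (nhds L) := by
  have hdiff : Tendsto
      (fun n => dist (y n) (y' n) / r n - dist (x n) (x' n) / r n) atTop (nhds 0) := by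
    have hb : Tendsto (fun n => dist (x n) (y n) / r n + dist (x' n) (y' n) / r n)
        atTop (nhds 0) := by
      simpa using hxy.add hx'y'
    refine squeeze_zero_norm (fun n => ?_) hb
    have hrn := (hr.1 n)
    rw [Real.norm_eq_abs, div_sub_div_same, ← add_div, abs_div, abs_of_pos hrn]
    gcongr
    calc |dist (y n) (y' n) - dist (x n) (x' n)|
        ≤ |dist (y n) (y' n) - dist (x n) (y' n)|
          + |dist (x n) (y' n) - dist (x n) (x' n)| := abs_sub_le _ _ _
      _ ≤ dist (x n) (y n) + dist (x' n) (y' n) := by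
          gcongr
          · simpa [dist_comm] using abs_dist_sub_le (y n) (x n) (y' n)
          · simpa [dist_comm] using abs_dist_sub_le (y' n) (x' n) (x n)
  have := hdiff.add hxx'
  simp only [zero_add] at this
  convert this using 2 with n
  ring

lemma mutuallyStable_symm {r : ℕ → ℝ} {x y : ℕ → X}
    (h : MutuallyStable r x y) : MutuallyStable r y x := by
  obtain ⟨L, hL⟩ := h
  exact ⟨L, by simpa [dist_comm] using hL⟩

lemma mutuallyStable_self (r : ℕ → ℝ) (x : ℕ → X) : MutuallyStable r x x :=
  ⟨0, by simp⟩

/-- Any self-stable family of sequences in `Z` extends to a maximal one. -/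
lemma exists_maximalSelfStableIn (Z : Set X) (r : ℕ → ℝ) (G0 : Set (ℕ → X))
    (hG0Z : ∀ x ∈ G0, InSubspace Z x) (hG0 : SelfStable r G0) :
    ∃ M, G0 ⊆ M ∧ MaximalSelfStableIn Z r M := by
  set S : Set (Set (ℕ → X)) :=
    {G | (∀ x ∈ G, InSubspace Z x) ∧ SelfStable r G} with hS
  have hchain : ∀ c ⊆ S, IsChain (· ⊆ ·) c → c.Nonempty →
      ∃ ub ∈ S, ∀ s ∈ c, s ⊆ ub := by
    intro c hcS hc hne
    refine ⟨⋃₀ c, ⟨?_, ?_⟩, fun s hs => Set.subset_sUnion_of_mem hs⟩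
    · rintro x ⟨s, hs, hxs⟩
      exact (hcS hs).1 x hxs
    · rintro x ⟨s, hs, hxs⟩ y ⟨t, ht, hyt⟩
      rcases hc.total hs ht with h | h
      · exact (hcS ht).2 x (h hxs) y hyt
      · exact (hcS hs).2 x hxs y (h hyt)
  obtain ⟨M, hGM, hmax⟩ := zorn_subset_nonempty S hchain G0 ⟨hG0Z, hG0⟩
  refine ⟨M, hGM, hmax.1.1, hmax.1.2, fun G hGZ hGs hMG => ?_⟩
  exact subset_antisymm (hmax.2 ⟨hGZ, hGs⟩ hMG) hMG

end Aux

/-- If there is a unique maximal self-stable family in `Z̃` containing `ã`, then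
`[Z̃_{a,r̃}]_Y` is the unique maximal self-stable family in `Ỹ` containing `ã`. -/
theorem stmt_16 {X : Type*} [MetricSpace X] (Y Z : Set X) (a : X)
    (haY : a ∈ Y) (haZ : a ∈ Z) (r : ℕ → ℝ) (hr : Normalizing r)
    (hYZ : TangentEquiv Y Z a r)
    (F : Set (ℕ → X)) (hF : MaximalSelfStableIn Z r F) (haF : (fun _ => a) ∈ F)
    (huniq : ∀ G : Set (ℕ → X), MaximalSelfStableIn Z r G → (fun _ => a) ∈ G → G = F) :
    MaximalSelfStableIn Y r (bracket Y r F) ∧ (fun _ => a) ∈ bracket Y r F ∧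
      ∀ G : Set (ℕ → X), MaximalSelfStableIn Y r G → (fun _ => a) ∈ G →
        G = bracket Y r F := by
  obtain ⟨hFZ, hFs, hFmax⟩ := hF
  -- Any sequence in `Z` mutually stable with the constant sequence `a` lies in `F`.
  have hzF : ∀ z : ℕ → X, InSubspace Z z → MutuallyStable r z (fun _ => a) → z ∈ F := by
    intro z hzZ hza
    have hpZ : ∀ x ∈ ({z, fun _ => a} : Set (ℕ → X)), InSubspace Z x := by
      rintro x hx
      simp only [Set.mem_insert_iff, Set.mem_singleton_iff] at hx
      rcases hx with rfl | rfl
      · exact hzZ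
      · exact fun _ => haZ
    have hpS : SelfStable r ({z, fun _ => a} : Set (ℕ → X)) := by
      intro x hx y hy
      simp only [Set.mem_insert_iff, Set.mem_singleton_iff] at hx hy
      rcases hx with rfl | rfl <;> rcases hy with rfl | rfl
      · exact mutuallyStable_self r _
      · exact hza
      · exact mutuallyStable_symm hza
      · exact mutuallyStable_self r _
    obtain ⟨M, hsub, hM⟩ := exists_maximalSelfStableIn Z r {z, fun _ => a} hpZ hpS
    have hMF : M = F := huniq M hM (hsub (by simp))
    exact hMF ▸ hsub (by simp)
  -- `ã ∈ [F]_Y`.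
  have hamem : (fun _ => a) ∈ bracket Y r F :=
    ⟨fun _ => haY, fun _ => a, haF, by simp⟩
  -- The key transfer: a member of a self-stable family in `Y` containing `ã`
  -- has a partner in `F` at normalized distance 0.
  have key : ∀ G : Set (ℕ → X), (∀ x ∈ G, InSubspace Y x) → SelfStable r G →
      (fun _ => a) ∈ G → ∀ g ∈ G, ∃ z ∈ F,
        Tendsto (fun n => dist (g n) (z n) / r n) atTop (nhds 0) := by
    intro G hGY hGs haG g hg
    have hga : MutuallyStable r g (fun _ => a) := hGs g hg _ haG
    obtain ⟨z, hzZ, hgz⟩ := hYZ.1 g (hGY g hg) hga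
    obtain ⟨L, hL⟩ := hga
    have hza : MutuallyStable r z (fun _ => a) :=
      ⟨L, transfer_tendsto hr hgz (by simp) hL⟩
    exact ⟨z, hzF z hzZ hza, hgz⟩
  -- Self-stability of the bracket.
  have hbrS : SelfStable r (bracket Y r F) := by
    rintro y ⟨hyY, x, hxF, hxy⟩ y' ⟨hy'Y, x', hx'F, hx'y'⟩
    obtain ⟨L, hL⟩ := hFs x hxF x' hx'F
    exact ⟨L, transfer_tendsto hr hxy hx'y' hL⟩
  have hbrY : ∀ x ∈ bracket Y r F, InSubspace Y x := fun x hx => hx.1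
  -- Maximality of the bracket.
  have hbrMax : ∀ G, (∀ x ∈ G, InSubspace Y x) → SelfStable r G →
      bracket Y r F ⊆ G → G = bracket Y r F := by
    intro G hGY hGs hsub
    refine subset_antisymm (fun g hg => ?_) hsub
    obtain ⟨z, hzF', hgz⟩ := key G hGY hGs (hsub hamem) g hg
    exact ⟨hGY g hg, z, hzF', by simpa [dist_comm] using hgz⟩
  have hbr : MaximalSelfStableIn Y r (bracket Y r F) := ⟨hbrY, hbrS, hbrMax⟩
  refine ⟨hbr, hamem, fun G hG haG => ?_⟩
  -- Uniqueness: `G ∪ bracket` is self-stable in `Y`.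
  obtain ⟨hGY, hGs, hGmax⟩ := hG
  have hUY : ∀ x ∈ G ∪ bracket Y r F, InSubspace Y x := by
    rintro x (hx | hx)
    · exact hGY x hx
    · exact hx.1
  have hcross : ∀ g ∈ G, ∀ b ∈ bracket Y r F, MutuallyStable r g b := by
    intro g hg b hb
    obtain ⟨z, hzF', hgz⟩ := key G hGY hGs haG g hg
    obtain ⟨hbY, x, hxF, hxb⟩ := hb
    obtain ⟨L, hL⟩ := hFs z hzF' x hxF
    exact ⟨L, transfer_tendsto hr (by simpa [dist_comm] using hgz) hxb hL⟩
  have hUS : SelfStable r (G ∪ bracket Y r F) := by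
    rintro x (hx | hx) y (hy | hy)
    · exact hGs x hx y hy
    · exact hcross x hx y hy
    · exact mutuallyStable_symm (hcross y hy x hx)
    · exact hbrS x hx y hy
  have h1 : G ∪ bracket Y r F = G :=
    hGmax _ hUY hUS Set.subset_union_left
  have h2 : G ∪ bracket Y r F = bracket Y r F :=
    hbrMax _ hUY hUS Set.subset_union_right
  rw [← h1, h2]
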